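/- arXiv:1405.0135 — 3 statements merged into one kernel-verified Lean document; each statement's English description precedes it below -/
import Mathlib

section
/- Let X be a square-integrable real random variable on a probability space (Ω, F, P), let N be a positive integer, and let c ∈ ℝ. Then the infimum over all Borel-measurable maps ξ : ℝ → {1, …, N} of the quantization distortion D(ξ, X + c) = E[((X + c) − E[(X + c) | σ(ξ∘(X + c))])²] equals the infimum over all such ξ of D(ξ, X) = E[(X − E[X | σ(ξ∘X)])²]. In other words, the minimal N-level quantizer distortion of a real random variable is invariant under translation of the variable by any constant. -/
open MeasureTheory

/-- The quantization distortion of the real random variable `Y` under the `N`-level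
quantizer `ξ`: the mean squared error of the conditional expectation of `Y` given
the σ-algebra generated by the discrete random variable `ξ ∘ Y`. -/
noncomputable def quantDistortion {Ω : Type*} [MeasurableSpace Ω] (P : Measure Ω)
    (N : ℕ) (ξ : ℝ → Fin N) (Y : Ω → ℝ) : ℝ :=
  ∫ ω, (Y ω - (P[Y | MeasurableSpace.comap (fun ω => ξ (Y ω)) inferInstance]) ω) ^ 2 ∂P

lemma quantDistortion_nonneg {Ω : Type*} [MeasurableSpace Ω] (P : Measure Ω)
    (N : ℕ) (ξ : ℝ → Fin N) (Y : Ω → ℝ) : 0 ≤ quantDistortion P N ξ Y :=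
  integral_nonneg fun ω => sq_nonneg _

lemma quantDistortion_shift {Ω : Type*} [MeasurableSpace Ω] (P : Measure Ω)
    [IsProbabilityMeasure P] (X : Ω → ℝ) (hXm : Measurable X) (hX : MemLp X 2 P)
    (N : ℕ) (ξ : ℝ → Fin N) (hξ : Measurable ξ) (c : ℝ) :
    quantDistortion P N ξ (fun ω => X ω + c)
      = quantDistortion P N (fun x => ξ (x + c)) X := by
  have hm : MeasurableSpace.comap (fun ω => ξ (X ω + c)) inferInstance
      ≤ ‹MeasurableSpace Ω› :=
    measurable_iff_comap_le.mp (hξ.comp (hXm.add_const c))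
  set m : MeasurableSpace Ω :=
    MeasurableSpace.comap (fun ω => ξ (X ω + c)) inferInstance with hm_def
  have hXint : Integrable X P := hX.integrable (by norm_num)
  have hadd : P[(fun ω => X ω + c) | m] =ᵐ[P] fun ω => (P[X | m]) ω + c := by
    have h1 : P[(fun ω => X ω + c) | m]
        =ᵐ[P] P[X | m] + P[(fun _ => c : Ω → ℝ) | m] :=
      condExp_add hXint (integrable_const c) m
    have h2 : P[(fun _ => c : Ω → ℝ) | m] = fun _ => c := condExp_const (μ := P) hm c
    filter_upwards [h1] with ω hω
    simp [hω, h2]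
  unfold quantDistortion
  refine integral_congr_ae ?_
  filter_upwards [hadd] with ω hω
  simp only [← hm_def] at *
  rw [hω]
  ring

/-- The minimal `N`-level quantizer distortion of a square-integrable real random
variable is invariant under translation of the variable by any constant `c`. -/
theorem stmt5 {Ω : Type*} [MeasurableSpace Ω] (P : Measure Ω) [IsProbabilityMeasure P]
    (X : Ω → ℝ) (hXm : Measurable X) (hX : MemLp X 2 P)
    (N : ℕ) (hN : 0 < N) (c : ℝ) :
    (⨅ ξ : { ξ : ℝ → Fin N // Measurable ξ },
      quantDistortion P N ξ.1 (fun ω => X ω + c))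
    = ⨅ ξ : { ξ : ℝ → Fin N // Measurable ξ }, quantDistortion P N ξ.1 X := by
  have hbdd1 : BddBelow (Set.range fun ξ : { ξ : ℝ → Fin N // Measurable ξ } =>
      quantDistortion P N ξ.1 (fun ω => X ω + c)) :=
    ⟨0, by rintro x ⟨ξ, rfl⟩; exact quantDistortion_nonneg _ _ _ _⟩
  have hbdd2 : BddBelow (Set.range fun ξ : { ξ : ℝ → Fin N // Measurable ξ } =>
      quantDistortion P N ξ.1 X) :=
    ⟨0, by rintro x ⟨ξ, rfl⟩; exact quantDistortion_nonneg _ _ _ _⟩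
  have : Nonempty { ξ : ℝ → Fin N // Measurable ξ } :=
    ⟨⟨fun _ => ⟨0, hN⟩, measurable_const⟩⟩
  apply le_antisymm
  · refine le_ciInf fun ξ => ?_
    have key : quantDistortion P N (fun x => ξ.1 (x - c)) (fun ω => X ω + c)
        = quantDistortion P N ξ.1 X := by
      rw [quantDistortion_shift P X hXm hX N (fun x => ξ.1 (x - c)) (ξ.2.comp (measurable_id.sub_const c)) c]
      simp
    calc (⨅ ξ : { ξ : ℝ → Fin N // Measurable ξ },
          quantDistortion P N ξ.1 (fun ω => X ω + c))
        ≤ quantDistortion P N (fun x => ξ.1 (x - c)) (fun ω => X ω + c) :=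
          ciInf_le hbdd1 ⟨fun x => ξ.1 (x - c), ξ.2.comp (measurable_id.sub_const c)⟩
      _ = quantDistortion P N ξ.1 X := key
  · refine le_ciInf fun ξ => ?_
    have key : quantDistortion P N ξ.1 (fun ω => X ω + c)
        = quantDistortion P N (fun x => ξ.1 (x + c)) X :=
      quantDistortion_shift P X hXm hX N ξ.1 ξ.2 c
    calc (⨅ ξ : { ξ : ℝ → Fin N // Measurable ξ }, quantDistortion P N ξ.1 X)
        ≤ quantDistortion P N (fun x => ξ.1 (x + c)) X :=
          ciInf_le hbdd2 ⟨fun x => ξ.1 (x + c), ξ.2.comp (measurable_id.add_const c)⟩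
      _ = quantDistortion P N ξ.1 (fun ω => X ω + c) := key.symm
end

section
/- Let A, B ∈ ℝ and define F(x) = −(B/√(1+B²)) · φ(A/√(1+B²)) · Φ(x√(1+B²) − AB/√(1+B²)) − Φ(A − Bx) · φ(x). Then for every x ∈ ℝ, F is differentiable at x with F′(x) = x · φ(x) · Φ(A − Bx). -/
/-- The standard normal density. -/
noncomputable def stdGaussPDF (x : ℝ) : ℝ :=
  Real.exp (-x ^ 2 / 2) / Real.sqrt (2 * Real.pi)

/-- The standard normal cumulative distribution function. -/
noncomputable def stdGaussCDF (x : ℝ) : ℝ :=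
  ∫ t in Set.Iic x, stdGaussPDF t

lemma stdGaussPDF_eq (x : ℝ) :
    stdGaussPDF x = (1 / Real.sqrt (2 * Real.pi)) * Real.exp (-(1/2) * x ^ 2) := by
  unfold stdGaussPDF; ring_nf

lemma stdGaussPDF_integrable : MeasureTheory.Integrable stdGaussPDF := by
  have h := (integrable_exp_neg_mul_sq (b := (1/2 : ℝ)) (by norm_num)).const_mul
    (1 / Real.sqrt (2 * Real.pi))
  refine h.congr ?_
  filter_upwards with x
  rw [stdGaussPDF_eq]

lemma stdGaussPDF_continuous : Continuous stdGaussPDF := by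
  unfold stdGaussPDF
  continuity

lemma stdGaussCDF_hasDerivAt (y : ℝ) : HasDerivAt stdGaussCDF (stdGaussPDF y) y := by
  have hint := stdGaussPDF_integrable
  have key : ∀ z : ℝ, stdGaussCDF z = stdGaussCDF 0 + ∫ t in (0:ℝ)..z, stdGaussPDF t := by
    intro z
    have := intervalIntegral.integral_Iic_sub_Iic (hint.integrableOn) (hint.integrableOn)
      (a := (0:ℝ)) (b := z)
    unfold stdGaussCDF
    linarith [this]
  have hd : HasDerivAt (fun z => stdGaussCDF 0 + ∫ t in (0:ℝ)..z, stdGaussPDF t)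
      (stdGaussPDF y) y := by
    have := intervalIntegral.integral_hasDerivAt_right
      (f := stdGaussPDF) (a := (0:ℝ)) (b := y)
      (hint.intervalIntegrable)
      (stdGaussPDF_continuous.stronglyMeasurableAtFilter _ _)
      (stdGaussPDF_continuous.continuousAt)
    exact this.const_add _
  exact hd.congr_of_eventuallyEq (Filter.Eventually.of_forall key)

lemma stdGaussPDF_hasDerivAt (y : ℝ) :
    HasDerivAt stdGaussPDF (-y * stdGaussPDF y) y := by
  have h1 : HasDerivAt (fun x : ℝ => -x ^ 2 / 2) (-y) y := by
    have := ((hasDerivAt_pow 2 y).neg).div_const 2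
    exact this.congr_deriv (by ring)
  have h2 := (h1.exp).div_const (Real.sqrt (2 * Real.pi))
  unfold stdGaussPDF
  exact h2.congr_deriv (by ring)

lemma pdf_product (A B x : ℝ) :
    stdGaussPDF (A / Real.sqrt (1 + B ^ 2)) *
      stdGaussPDF (x * Real.sqrt (1 + B ^ 2) - A * B / Real.sqrt (1 + B ^ 2))
    = stdGaussPDF (A - B * x) * stdGaussPDF x := by
  have hs : (0:ℝ) < 1 + B ^ 2 := by positivity
  have hsr : Real.sqrt (1 + B ^ 2) ≠ 0 := by positivity
  have hsq : Real.sqrt (1 + B ^ 2) ^ 2 = 1 + B ^ 2 := Real.sq_sqrt hs.le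
  unfold stdGaussPDF
  rw [div_mul_div_comm, div_mul_div_comm, ← Real.exp_add, ← Real.exp_add]
  congr 2
  have h4 : Real.sqrt (1 + B ^ 2) ^ 4 = (1 + B ^ 2) ^ 2 := by
    rw [show (4:ℕ) = 2 * 2 from rfl, pow_mul, hsq]
  field_simp
  ring_nf
  rw [h4, hsq]
  ring

/-- Antiderivative identity from Owen's table of normal integrals:
`d/dx [ -(B/√(1+B²)) φ(A/√(1+B²)) Φ(x√(1+B²) - AB/√(1+B²)) - Φ(A - Bx) φ(x) ]
  = x φ(x) Φ(A - Bx)`. -/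
theorem stmt6 (A B : ℝ) (x : ℝ) :
    HasDerivAt (fun x : ℝ =>
        -(B / Real.sqrt (1 + B ^ 2)) * stdGaussPDF (A / Real.sqrt (1 + B ^ 2)) *
            stdGaussCDF (x * Real.sqrt (1 + B ^ 2) - A * B / Real.sqrt (1 + B ^ 2))
          - stdGaussCDF (A - B * x) * stdGaussPDF x)
      (x * stdGaussPDF x * stdGaussCDF (A - B * x)) x := by
  set s := Real.sqrt (1 + B ^ 2) with hs_def
  have hs : (0:ℝ) < s := Real.sqrt_pos.mpr (by positivity)
  have hu : HasDerivAt (fun x : ℝ => x * s - A * B / s) s x := by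
    simpa using ((hasDerivAt_id x).mul_const s).sub_const (A * B / s)
  have hv : HasDerivAt (fun x : ℝ => A - B * x) (-B) x := by
    simpa using ((hasDerivAt_id x).const_mul B).const_sub A
  have h1 : HasDerivAt
      (fun x : ℝ => -(B / s) * stdGaussPDF (A / s) * stdGaussCDF (x * s - A * B / s))
      (-(B / s) * stdGaussPDF (A / s) * (stdGaussPDF (x * s - A * B / s) * s)) x :=
    ((stdGaussCDF_hasDerivAt _).comp x hu).const_mul _
  have h2 : HasDerivAt
      (fun x : ℝ => stdGaussCDF (A - B * x) * stdGaussPDF x)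
      (stdGaussPDF (A - B * x) * -B * stdGaussPDF x
        + stdGaussCDF (A - B * x) * (-x * stdGaussPDF x)) x :=
    (((stdGaussCDF_hasDerivAt _).comp x hv).mul (stdGaussPDF_hasDerivAt x))
  have h := h1.sub h2
  refine h.congr_deriv ?_
  have key := pdf_product A B x
  rw [← hs_def] at key
  have hbs : B / s * s = B := div_mul_cancel₀ B hs.ne'
  have heq : -(B / s) * stdGaussPDF (A / s) * (stdGaussPDF (x * s - A * B / s) * s)
      = -(B * (stdGaussPDF (A - B * x) * stdGaussPDF x)) := by
    have hs0 : s ≠ 0 := hs.ne'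
    rw [← key]; field_simp
  rw [heq]; ring
end

section
/- Let σ > 0 and θ > 0. Let W be a standard Gaussian random variable on a probability space, and for m ∈ ℝ set X_m = m + σW, so X_m ∼ N(m, σ²). Let ξ : ℝ → {1, 2, 3} be the fixed quantizer with ξ(x) = 1 for x ≤ −θ, ξ(x) = 2 for −θ < x ≤ θ, and ξ(x) = 3 for x > θ, and define Γ(m) = E[(X_m − E[X_m | σ(ξ∘X_m)])²]. Then Γ is not constant: there exist m₁, m₂ ∈ ℝ with Γ(m₁) ≠ Γ(m₂). -/
open MeasureTheory ProbabilityTheory Real Filter Set Topology ENNReal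

lemma gauss_pdf_toReal (x : ℝ) :
    (gaussianPDF 0 1 x).toReal = (√(2 * π))⁻¹ * rexp (-(1/2) * x ^ 2) := by
  rw [gaussianPDF, ENNReal.toReal_ofReal (gaussianPDFReal_nonneg _ _ _), gaussianPDFReal]
  push_cast
  ring_nf

lemma gauss_sq_int : Integrable (fun x : ℝ => x ^ 2) (gaussianReal 0 1) := by
  rw [gaussianReal_of_var_ne_zero 0 one_ne_zero,
    integrable_withDensity_iff (measurable_gaussianPDF 0 1)
      (Eventually.of_forall fun x => ENNReal.ofReal_lt_top)]
  simp only [gauss_pdf_toReal]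
  have := (integrable_rpow_mul_exp_neg_mul_sq (b := 1/2) (by norm_num) (s := 2) (by norm_num)).const_mul (√(2 * π))⁻¹
  refine this.congr (Eventually.of_forall fun x => ?_)
  simp only []
  rw [Real.rpow_two]
  ring

lemma gauss_id_int : Integrable (fun x : ℝ => x) (gaussianReal 0 1) := by
  refine Integrable.mono' ((integrable_const 1).add gauss_sq_int)
    measurable_id.aestronglyMeasurable (Eventually.of_forall fun x => ?_)
  simp only [norm_eq_abs]
  simp only [Pi.add_apply]
  rcases abs_cases x with ⟨h1, h2⟩ | ⟨h1, h2⟩ <;> nlinarith [sq_nonneg (x - 1), sq_nonneg (x + 1)]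

lemma gauss_mean_zero : ∫ x, x ∂(gaussianReal 0 1) = 0 := by
  have hmap : (gaussianReal 0 1).map (fun x => (-1 : ℝ) * x) = gaussianReal 0 1 := by
    rw [gaussianReal_map_const_mul (-1)]
    norm_num
  have h : ∫ x, x ∂(gaussianReal 0 1) = ∫ x, (-1 : ℝ) * x ∂(gaussianReal 0 1) := by
    conv_lhs => rw [← hmap]
    rw [integral_map (φ := fun x : ℝ => (-1:ℝ) * x) (f := fun x : ℝ => x)
      (measurable_const_mul (-1)).aemeasurable (by rw [hmap]; exact aestronglyMeasurable_id)]
  have : ∫ x, (-1 : ℝ) * x ∂(gaussianReal 0 1) = - ∫ x, x ∂(gaussianReal 0 1) := by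
    rw [integral_const_mul]; ring
  linarith [h, this]

lemma gauss_set_pos {s : Set ℝ} (hs : MeasurableSet s) (hvol : 0 < MeasureTheory.volume s) :
    0 < gaussianReal 0 1 s := by
  rw [gaussianReal_apply 0 one_ne_zero s]
  rcases eq_or_lt_of_le (show (0:ℝ≥0∞) ≤ ∫⁻ x in s, gaussianPDF 0 1 x from zero_le) with h0 | h
  · exfalso
    rw [eq_comm, lintegral_eq_zero_iff (measurable_gaussianPDF 0 1)] at h0
    have : {x : ℝ | ¬ gaussianPDF 0 1 x = 0} = Set.univ := by
      ext x; simp [ne_of_gt (gaussianPDF_pos 0 one_ne_zero x)]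
    rw [Filter.EventuallyEq, ae_iff] at h0
    simp only [Pi.zero_apply] at h0
    rw [this, Measure.restrict_apply_univ] at h0
    exact absurd h0 (ne_of_gt hvol)
  · exact h

lemma gauss_tail : Tendsto (fun n : ℕ => ∫ x in Iic (-(n:ℝ)), x^2 ∂(gaussianReal 0 1))
    atTop (𝓝 0) := by
  have key : Tendsto (fun n : ℕ => ∫ x, (Iic (-(n:ℝ))).indicator (fun x => x^2) x
      ∂(gaussianReal 0 1)) atTop (𝓝 (∫ x : ℝ, (0:ℝ) ∂(gaussianReal 0 1))) := by
    refine tendsto_integral_of_dominated_convergence (fun x => x^2)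
      (fun n => ((measurable_id.pow_const 2).indicator measurableSet_Iic).aestronglyMeasurable)
      gauss_sq_int (fun n => Eventually.of_forall fun x => ?_)
      (Eventually.of_forall fun x => ?_)
    · refine (norm_indicator_le_norm_self _ x).trans (le_of_eq ?_)
      simp [abs_of_nonneg (sq_nonneg x)]
    · refine Tendsto.congr' ?_ tendsto_const_nhds
      rw [Filter.EventuallyEq, eventually_atTop]
      refine ⟨⌈-x⌉₊ + 1, fun n hn => ?_⟩
      rw [eq_comm, Set.indicator_apply_eq_zero]
      intro hx
      exfalso
      simp only [mem_Iic] at hx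
      have h1 : -x ≤ (⌈-x⌉₊ : ℝ) := Nat.le_ceil _
      have h2 : ((⌈-x⌉₊ + 1 : ℕ) : ℝ) ≤ (n:ℝ) := by exact_mod_cast hn
      push_cast at h2
      linarith
  simp only [integral_zero] at key
  refine key.congr fun n => integral_indicator measurableSet_Iic

lemma cell_expand {Ω : Type*} [MeasurableSpace Ω] (P : Measure Ω) {s : Set Ω}
    (f : Ω → ℝ) (hf : IntegrableOn f s P) (hf2 : IntegrableOn (fun ω => f ω ^ 2) s P)
    (a c : ℝ) (hc : c * (P s).toReal = ∫ ω in s, f ω ∂P) [IsFiniteMeasure P] :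
    ∫ ω in s, (f ω - c)^2 ∂P
      = (∫ ω in s, (f ω - a)^2 ∂P) - (P s).toReal * (c - a)^2 := by
  have e : ∀ b : ℝ, ∫ ω in s, (f ω - b)^2 ∂P
      = (∫ ω in s, f ω ^ 2 ∂P) - 2*b*(∫ ω in s, f ω ∂P) + (P s).toReal * b^2 := by
    intro b
    have hfun : (fun ω => (f ω - b)^2) = fun ω => (f ω ^ 2 - (2*b) * f ω) + b^2 := by
      funext ω; ring
    have h1 : IntegrableOn (fun ω => f ω ^ 2 - 2 * b * f ω) s P := hf2.sub (hf.const_mul (2*b))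
    have h2 : IntegrableOn (fun _ : Ω => b ^ 2) s P :=
      integrableOn_const (measure_ne_top _ _)
    have h3 : IntegrableOn (fun ω => 2 * b * f ω) s P := hf.const_mul (2*b)
    rw [hfun, integral_add h1 h2, integral_sub hf2 h3,
      integral_const_mul, setIntegral_const, smul_eq_mul, measureReal_def]
  rw [e c, e a, ← hc]
  ring

lemma distortion_eq {Ω : Type*} [MeasurableSpace Ω] (P : Measure Ω) [IsProbabilityMeasure P]
    (X : Ω → ℝ) (hXm : Measurable X) (hX2 : Integrable (fun ω => X ω ^ 2) P)
    (Y : Ω → Fin 3) (hYm : Measurable Y) :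
    ∫ ω, (X ω - (P[X | MeasurableSpace.comap Y inferInstance]) ω) ^ 2 ∂P
      = ∑ i : Fin 3, ∫ ω in Y ⁻¹' {i},
          (X ω - (∫ ω' in Y ⁻¹' {i}, X ω' ∂P) / (P (Y ⁻¹' {i})).toReal) ^ 2 ∂P := by
  classical
  have hm : MeasurableSpace.comap Y inferInstance ≤ _ := hYm.comap_le
  have hXint : Integrable X P := by
    refine Integrable.mono' ((integrable_const 1).add hX2) hXm.aestronglyMeasurable
      (Eventually.of_forall fun ω => ?_)
    simp only [Pi.add_apply, Real.norm_eq_abs]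
    rcases abs_cases (X ω) with ⟨h1, h2⟩ | ⟨h1, h2⟩ <;>
      nlinarith [sq_nonneg (X ω - 1), sq_nonneg (X ω + 1)]
  set c : Fin 3 → ℝ := fun i => (∫ ω' in Y ⁻¹' {i}, X ω' ∂P) / (P (Y ⁻¹' {i})).toReal with hc
  set g : Ω → ℝ := fun ω => c (Y ω) with hg
  have hA : ∀ i : Fin 3, MeasurableSet (Y ⁻¹' {i}) := fun i => hYm (measurableSet_singleton i)
  have hcp : ∀ i, c i * (P (Y ⁻¹' {i})).toReal = ∫ ω' in Y ⁻¹' {i}, X ω' ∂P := by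
    intro i
    rcases eq_or_ne ((P (Y ⁻¹' {i})).toReal) 0 with h | h
    · have h0 : P (Y ⁻¹' {i}) = 0 := by
        simpa [ENNReal.toReal_eq_zero_iff, measure_ne_top] using h
      simp [hc, h, Measure.restrict_eq_zero.mpr h0]
    · simp only [hc]
      field_simp
  have hcb : ∀ i : Fin 3, ‖c i‖ ≤ ‖c 0‖ + ‖c 1‖ + ‖c 2‖ := by
    intro i
    have h0 := norm_nonneg (c 0); have h1 := norm_nonneg (c 1); have h2 := norm_nonneg (c 2)
    fin_cases i
    · show ‖c 0‖ ≤ ‖c 0‖ + ‖c 1‖ + ‖c 2‖; linarith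
    · show ‖c 1‖ ≤ ‖c 0‖ + ‖c 1‖ + ‖c 2‖; linarith
    · show ‖c 2‖ ≤ ‖c 0‖ + ‖c 1‖ + ‖c 2‖; linarith
  have hgm0 : Measurable g := (measurable_from_top (f := c)).comp hYm
  have hgint : Integrable g P :=
    Integrable.mono' (integrable_const (‖c 0‖ + ‖c 1‖ + ‖c 2‖)) hgm0.aestronglyMeasurable
      (Eventually.of_forall fun ω => hcb (Y ω))
  have hgcell : ∀ i : Fin 3, ∫ ω in Y ⁻¹' {i}, g ω ∂P = ∫ ω in Y ⁻¹' {i}, X ω ∂P := by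
    intro i
    have h1 : ∫ ω in Y ⁻¹' {i}, g ω ∂P = ∫ _ω in Y ⁻¹' {i}, c i ∂P := by
      refine setIntegral_congr_fun (hA i) fun ω hω => ?_
      rw [Set.mem_preimage, Set.mem_singleton_iff] at hω
      simp only [hg, hω]
    rw [h1, setIntegral_const, smul_eq_mul, measureReal_def, mul_comm, hcp i]
  have hseteq : ∀ s, MeasurableSet[MeasurableSpace.comap Y inferInstance] s → P s < ⊤ →
      ∫ ω in s, g ω ∂P = ∫ ω in s, X ω ∂P := by
    rintro s ⟨t, -, rfl⟩ -
    have hset : Y ⁻¹' t = ⋃ i ∈ (Set.toFinite t).toFinset, Y ⁻¹' {i} := by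
      ext ω
      simp only [Set.mem_preimage, Set.mem_iUnion, Set.Finite.mem_toFinset,
        Set.mem_singleton_iff, exists_prop]
      exact ⟨fun h => ⟨Y ω, h, rfl⟩, fun ⟨i, hi, h⟩ => h ▸ hi⟩
    have hdisj : Set.Pairwise ↑((Set.toFinite t).toFinset)
        (Function.onFun Disjoint fun i : Fin 3 => Y ⁻¹' {i}) := fun i _ j _ hij =>
      Disjoint.preimage Y (Set.disjoint_singleton.mpr hij)
    rw [hset, integral_biUnion_finset _ (fun i _ => hA i) hdisj
        (fun i _ => hgint.integrableOn),
      integral_biUnion_finset _ (fun i _ => hA i) hdisj (fun i _ => hXint.integrableOn)]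
    exact Finset.sum_congr rfl fun i _ => hgcell i
  have hYm' : Measurable[MeasurableSpace.comap Y inferInstance] Y :=
    Measurable.of_comap_le le_rfl
  have hgm' : AEStronglyMeasurable[MeasurableSpace.comap Y inferInstance] g P :=
    (Measurable.stronglyMeasurable ((measurable_from_top (f := c)).comp hYm')).aestronglyMeasurable
  have hce : g =ᵐ[P] P[X | MeasurableSpace.comap Y inferInstance] :=
    ae_eq_condExp_of_forall_setIntegral_eq hm hXint (fun s _ _ => hgint.integrableOn)
      hseteq hgm'
  have hint2 : Integrable (fun ω => (X ω - g ω) ^ 2) P := by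
    have hb : ∀ᵐ ω ∂P, ‖g ω‖ ≤ ‖c 0‖ + ‖c 1‖ + ‖c 2‖ := Eventually.of_forall fun ω => hcb (Y ω)
    have h1 : Integrable (fun ω => g ω * X ω) P :=
      hXint.bdd_mul hgm0.aestronglyMeasurable hb
    have h2 : Integrable (fun ω => g ω * g ω) P :=
      hgint.bdd_mul hgm0.aestronglyMeasurable hb
    have hfun : (fun ω => (X ω - g ω) ^ 2)
        = fun ω => (X ω ^ 2 - 2 * (g ω * X ω)) + g ω * g ω := funext fun ω => by ring
    rw [hfun]
    exact (hX2.sub (h1.const_mul 2)).add h2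
  have lhs_eq : ∫ ω, (X ω - (P[X | MeasurableSpace.comap Y inferInstance]) ω) ^ 2 ∂P
      = ∫ ω, (X ω - g ω) ^ 2 ∂P := by
    refine integral_congr_ae ?_
    filter_upwards [hce] with ω h
    rw [← h]
  have huniv : (Set.univ : Set Ω) = ⋃ i : Fin 3, Y ⁻¹' {i} := by
    ext ω; simp
  have hpair : Pairwise (Function.onFun Disjoint fun i : Fin 3 => Y ⁻¹' {i}) := fun i j hij =>
    Disjoint.preimage Y (Set.disjoint_singleton.mpr hij)
  rw [lhs_eq, ← setIntegral_univ, huniv,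
    integral_iUnion_fintype hA hpair (fun i => hint2.integrableOn)]
  refine Finset.sum_congr rfl fun i _ => ?_
  refine setIntegral_congr_fun (hA i) fun ω hω => ?_
  rw [Set.mem_preimage, Set.mem_singleton_iff] at hω
  simp only [hg, hω, hc]

lemma avg_mul_measure {Ω : Type*} [MeasurableSpace Ω] (P : Measure Ω) [IsFiniteMeasure P]
    (s : Set Ω) (F : Ω → ℝ) :
    ((∫ ω in s, F ω ∂P) / (P s).toReal) * (P s).toReal = ∫ ω in s, F ω ∂P := by
  rcases eq_or_ne ((P s).toReal) 0 with h | h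
  · have h0 : P s = 0 := by
      simpa [ENNReal.toReal_eq_zero_iff, measure_ne_top] using h
    simp [h, Measure.restrict_eq_zero.mpr h0]
  · field_simp

lemma partition_sum {Ω : Type*} [MeasurableSpace Ω] (P : Measure Ω)
    (Y : Ω → Fin 3) (hY : Measurable Y) (F : Ω → ℝ) (hF : Integrable F P) :
    ∫ ω, F ω ∂P = ∑ i : Fin 3, ∫ ω in Y ⁻¹' {i}, F ω ∂P := by
  have huniv : (Set.univ : Set Ω) = ⋃ i : Fin 3, Y ⁻¹' {i} := by ext ω; simp
  have hpair : Pairwise (Function.onFun Disjoint fun i : Fin 3 => Y ⁻¹' {i}) := fun i j hij =>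
    Disjoint.preimage Y (Set.disjoint_singleton.mpr hij)
  rw [← setIntegral_univ, huniv,
    integral_iUnion_fintype (fun i => hY (measurableSet_singleton i)) hpair
      (fun i => hF.integrableOn)]

/-- Dual effect of the control: for a Gaussian state `X_m = m + σW ∼ N(m, σ²)` and
the fixed three-cell threshold quantizer `ξ` with thresholds `±θ`, the quantization
distortion `Γ(m) = E[(X_m - E[X_m | σ(ξ ∘ X_m)])²]` is not constant in `m`. -/
theorem stmt14 {Ω : Type*} [MeasurableSpace Ω] (P : Measure Ω) [IsProbabilityMeasure P]
    (σ θ : ℝ) (hσ : 0 < σ) (hθ : 0 < θ)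
    (W : Ω → ℝ) (hWm : Measurable W)
    (hW : Measure.map W P = gaussianReal 0 1)
    (ξ : ℝ → Fin 3)
    (hξ : ξ = fun x => if x ≤ -θ then 0 else if x ≤ θ then 1 else 2)
    (Γ : ℝ → ℝ)
    (hΓ : Γ = fun m =>
      ∫ ω, ((m + σ * W ω) -
          (P[(fun ω => m + σ * W ω) |
            MeasurableSpace.comap (fun ω => ξ (m + σ * W ω)) inferInstance]) ω) ^ 2 ∂P) :
    ∃ m₁ m₂ : ℝ, Γ m₁ ≠ Γ m₂ := by
  have hξmeas : Measurable ξ := by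
    rw [hξ]
    exact Measurable.ite (measurableSet_le measurable_id measurable_const) measurable_const
      (Measurable.ite (measurableSet_le measurable_id measurable_const) measurable_const
        measurable_const)
  have hXmeas : ∀ m : ℝ, Measurable (fun ω => m + σ * W ω) :=
    fun m => measurable_const.add (measurable_const.mul hWm)
  have hYmeas : ∀ m : ℝ, Measurable (fun ω => ξ (m + σ * W ω)) :=
    fun m => hξmeas.comp (hXmeas m)
  -- transfer of integrability from the gaussian to P
  have hIW : ∀ f : ℝ → ℝ, Measurable f → Integrable f (gaussianReal 0 1) →
      Integrable (fun ω => f (W ω)) P := by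
    intro f hf hfint
    rw [← hW] at hfint
    exact (integrable_map_measure hf.aestronglyMeasurable hWm.aemeasurable).mp hfint
  have hI1 : ∀ m b : ℝ, Integrable (fun ω => m + σ * W ω - b) P := by
    intro m b
    refine (hIW (fun x => m + σ * x - b) (by fun_prop) ?_)
    have h : Integrable (fun x : ℝ => (m - b) + σ * x) (gaussianReal 0 1) :=
      (integrable_const (m - b)).add (gauss_id_int.const_mul σ)
    exact h.congr (Eventually.of_forall fun x => by ring)
  have hI2 : ∀ m b : ℝ, Integrable (fun ω => (m + σ * W ω - b)^2) P := by
    intro m b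
    refine (hIW (fun x => (m + σ * x - b)^2) (by fun_prop) ?_)
    have h : Integrable (fun x : ℝ => ((m-b)^2 + (2*(m-b)*σ) * x) + σ^2 * x^2)
        (gaussianReal 0 1) :=
      ((integrable_const ((m-b)^2)).add (gauss_id_int.const_mul (2*(m-b)*σ))).add
        (gauss_sq_int.const_mul (σ^2))
    exact h.congr (Eventually.of_forall fun x => by ring)
  have hGamma : ∀ m : ℝ, Γ m = ∑ i : Fin 3, ∫ ω in (fun ω => ξ (m + σ * W ω)) ⁻¹' {i},
      ((m + σ * W ω) - (∫ ω' in (fun ω => ξ (m + σ * W ω)) ⁻¹' {i}, (m + σ * W ω') ∂P)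
        / (P ((fun ω => ξ (m + σ * W ω)) ⁻¹' {i})).toReal) ^ 2 ∂P := by
    intro m
    rw [hΓ]
    have h2 : Integrable (fun ω => (m + σ * W ω)^2) P := by
      have := hI2 m 0
      simpa using this
    exact distortion_eq P _ (hXmeas m) h2 _ (hYmeas m)
  have hI1' : ∀ m : ℝ, Integrable (fun ω => m + σ * W ω) P :=
    fun m => (hI1 m 0).congr (Eventually.of_forall fun ω => by ring)
  have hcell : ∀ m : ℝ, (fun ω => ξ (m + σ * W ω)) ⁻¹' {2} = W ⁻¹' (Ioi ((θ - m)/σ)) := by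
    intro m
    ext ω
    simp only [Set.mem_preimage, Set.mem_singleton_iff, Set.mem_Ioi, hξ]
    constructor
    · intro h
      by_contra hc
      push_neg at hc
      rw [le_div_iff₀ hσ] at hc
      have hle : m + σ * W ω ≤ θ := by nlinarith
      split_ifs at h with h1 h2
      any_goals exact absurd h (by decide)
      all_goals exact absurd hle h2
    · intro h
      rw [div_lt_iff₀ hσ] at h
      have hgt : θ < m + σ * W ω := by nlinarith
      rw [if_neg (by linarith), if_neg (by linarith)]
  have hcellc : ∀ m : ℝ,
      ((fun ω => ξ (m + σ * W ω)) ⁻¹' {2})ᶜ = W ⁻¹' (Iic ((θ - m)/σ)) := by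
    intro m; rw [hcell m, ← Set.preimage_compl, Set.compl_Ioi]
  have hPW : ∀ s : Set ℝ, MeasurableSet s → P (W ⁻¹' s) = gaussianReal 0 1 s := by
    intro s hs; rw [← hW, Measure.map_apply hWm hs]
  have hSI : ∀ (s : Set ℝ), MeasurableSet s → ∀ f : ℝ → ℝ, Measurable f →
      ∫ ω in W ⁻¹' s, f (W ω) ∂P = ∫ x in s, f x ∂(gaussianReal 0 1) := by
    intro s hs f hf
    rw [← hW, setIntegral_map hs hf.aestronglyMeasurable hWm.aemeasurable]
  have hTI : ∀ f : ℝ → ℝ, Measurable f →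
      ∫ ω, f (W ω) ∂P = ∫ x, f x ∂(gaussianReal 0 1) := by
    intro f hf; rw [← hW, integral_map hWm.aemeasurable hf.aestronglyMeasurable]
  -- key gaussian quantities
  have hqpos : 0 < σ * ∫ x in Ioi (θ/σ), x ∂(gaussianReal 0 1) := by
    have hγpos : 0 < gaussianReal 0 1 (Ioi (θ/σ)) :=
      gauss_set_pos measurableSet_Ioi (by simp [Real.volume_Ioi])
    have hγtop : gaussianReal 0 1 (Ioi (θ/σ)) ≠ ⊤ := measure_ne_top _ _
    have htr : 0 < (gaussianReal 0 1 (Ioi (θ/σ))).toReal :=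
      ENNReal.toReal_pos (ne_of_gt hγpos) hγtop
    have hconst : ∫ _x in Ioi (θ/σ), (θ/σ) ∂(gaussianReal 0 1)
        = (gaussianReal 0 1 (Ioi (θ/σ))).toReal * (θ/σ) := by
      rw [setIntegral_const, smul_eq_mul, measureReal_def]
    have hmono : ∫ _x in Ioi (θ/σ), (θ/σ) ∂(gaussianReal 0 1)
        ≤ ∫ x in Ioi (θ/σ), x ∂(gaussianReal 0 1) := by
      refine setIntegral_mono_on (integrableOn_const (measure_ne_top _ _))
        gauss_id_int.integrableOn measurableSet_Ioi (fun x hx => le_of_lt hx)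
    have hθσ : 0 < θ/σ := div_pos hθ hσ
    have hint : 0 < ∫ x in Ioi (θ/σ), x ∂(gaussianReal 0 1) :=
      lt_of_lt_of_le (by nlinarith) (le_trans (le_of_eq hconst.symm) hmono)
    exact mul_pos hσ hint
  set q : ℝ := σ * ∫ x in Ioi (θ/σ), x ∂(gaussianReal 0 1) with hqdef
  set I2 : ℝ := ∫ x, x^2 ∂(gaussianReal 0 1) with hI2def
  -- upper bound for Γ 0
  have hup : Γ 0 ≤ σ^2 * I2 - q^2 := by
    have hG0 := hGamma 0
    set Y : Ω → Fin 3 := fun ω => ξ (0 + σ * W ω) with hYdef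
    set A : Fin 3 → Set Ω := fun i => Y ⁻¹' {i} with hAdef
    have hAm : ∀ i, MeasurableSet (A i) := fun i => hYmeas 0 (measurableSet_singleton i)
    set av : Fin 3 → ℝ :=
      fun i => (∫ ω' in A i, (0 + σ * W ω') ∂P) / (P (A i)).toReal with havdef
    have hcp : ∀ i, av i * (P (A i)).toReal = ∫ ω' in A i, (0 + σ * W ω') ∂P :=
      fun i => avg_mul_measure P (A i) (fun ω' => 0 + σ * W ω')
    have hce : ∀ i, ∫ ω in A i, (0 + σ * W ω - av i)^2 ∂P
        = (∫ ω in A i, (0 + σ * W ω - 0)^2 ∂P) - (P (A i)).toReal * (av i - 0)^2 :=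
      fun i => cell_expand P (fun ω => 0 + σ * W ω) (hI1' 0).integrableOn
        ((hI2 0 0).congr (Eventually.of_forall fun ω => by ring)).integrableOn 0 (av i) (hcp i)
    have hsum2 : ∫ ω, (0 + σ * W ω - 0)^2 ∂P
        = ∑ i : Fin 3, ∫ ω in A i, (0 + σ * W ω - 0)^2 ∂P :=
      partition_sum P Y (hYmeas 0) _ (hI2 0 0)
    have htot : ∫ ω, (0 + σ * W ω - 0)^2 ∂P = σ^2 * I2 := by
      have h1 := hTI (fun x => (0 + σ * x - 0)^2) (by fun_prop)
      beta_reduce at h1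
      rw [h1]
      have h2 : (fun x : ℝ => (0 + σ * x - 0)^2) = fun x : ℝ => σ^2 * x^2 :=
        funext fun x => by ring
      rw [h2, integral_const_mul]
    have hq2' : ∫ ω' in A 2, (0 + σ * W ω') ∂P = q := by
      have hA2 : A 2 = W ⁻¹' (Ioi ((θ - 0)/σ)) := hcell 0
      rw [hA2]
      have h1 := hSI (Ioi ((θ - 0)/σ)) measurableSet_Ioi (fun x => 0 + σ * x) (by fun_prop)
      beta_reduce at h1
      rw [h1]
      have h2 : (θ - 0)/σ = θ/σ := by ring
      rw [h2]
      have h3 : (fun x : ℝ => 0 + σ * x) = fun x : ℝ => σ * x := funext fun x => by ring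
      rw [h3, integral_const_mul, hqdef]
    have hple : (P (A 2)).toReal ≤ 1 := by
      have h1 : P (A 2) ≤ 1 := prob_le_one
      calc (P (A 2)).toReal ≤ (1 : ℝ≥0∞).toReal :=
            (ENNReal.toReal_le_toReal (measure_ne_top P _) ENNReal.one_ne_top).mpr h1
        _ = 1 := ENNReal.toReal_one
    have hpnn : 0 ≤ (P (A 2)).toReal := ENNReal.toReal_nonneg
    have hkey : q^2 ≤ (P (A 2)).toReal * (av 2 - 0)^2 := by
      have h1 : q = av 2 * (P (A 2)).toReal := by rw [hcp 2, hq2']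
      nlinarith [mul_nonneg (mul_nonneg hpnn (sq_nonneg (av 2))) (sub_nonneg.mpr hple)]
    have hnn0 : 0 ≤ (P (A 0)).toReal * (av 0 - 0)^2 := by positivity
    have hnn1 : 0 ≤ (P (A 1)).toReal * (av 1 - 0)^2 := by positivity
    rw [hG0, Fin.sum_univ_three]
    rw [Fin.sum_univ_three] at hsum2
    linarith [hce 0, hce 1, hce 2]
  -- choose a level n
  have hTnn : ∀ k : ℕ, (0:ℝ) ≤ ∫ x in Iic (-(k:ℝ)), x^2 ∂(gaussianReal 0 1) :=
    fun k => setIntegral_nonneg measurableSet_Iic (fun x _ => sq_nonneg x)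
  obtain ⟨n, hTn, hn1⟩ : ∃ n : ℕ, (∫ x in Iic (-(n:ℝ)), x^2 ∂(gaussianReal 0 1))
      < min (q^2/(2*σ^2)) (1/4) ∧ 1 ≤ n := by
    have hpos : 0 < min (q^2/(2*σ^2)) (1/4) :=
      lt_min (div_pos (pow_pos hqpos 2) (by positivity)) (by norm_num)
    exact ((gauss_tail.eventually (gt_mem_nhds hpos)).and (eventually_ge_atTop 1)).exists
  set T : ℝ := ∫ x in Iic (-(n:ℝ)), x^2 ∂(gaussianReal 0 1) with hTdef
  have hTnn' : (0:ℝ) ≤ T := hTnn n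
  set m' : ℝ := θ + σ * (n:ℝ) with hm'def
  have hdiv : (θ - m')/σ = -(n:ℝ) := by
    rw [hm'def]; field_simp; ring
  have hlow : σ^2 * I2 - 2*σ^2*T ≤ Γ m' := by
    have hGm := hGamma m'
    set Y : Ω → Fin 3 := fun ω => ξ (m' + σ * W ω) with hYdef
    set A : Fin 3 → Set Ω := fun i => Y ⁻¹' {i} with hAdef
    have hAm : ∀ i, MeasurableSet (A i) := fun i => hYmeas m' (measurableSet_singleton i)
    set av : Fin 3 → ℝ :=
      fun i => (∫ ω' in A i, (m' + σ * W ω') ∂P) / (P (A i)).toReal with havdef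
    have hcp : ∀ i, av i * (P (A i)).toReal = ∫ ω' in A i, (m' + σ * W ω') ∂P :=
      fun i => avg_mul_measure P (A i) (fun ω' => m' + σ * W ω')
    have hA2c : (A 2)ᶜ = W ⁻¹' (Iic (-(n:ℝ))) := by rw [← hdiv]; exact hcellc m'
    have hpc : (P ((A 2)ᶜ)).toReal = (gaussianReal 0 1 (Iic (-(n:ℝ)))).toReal := by
      rw [hA2c, hPW _ measurableSet_Iic]
    have hpcnn : (0:ℝ) ≤ (P ((A 2)ᶜ)).toReal := ENNReal.toReal_nonneg
    have hpcle : (P ((A 2)ᶜ)).toReal ≤ T := by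
      rw [hpc]
      have h1 : (gaussianReal 0 1 (Iic (-(n:ℝ)))).toReal
          = ∫ _x in Iic (-(n:ℝ)), (1:ℝ) ∂(gaussianReal 0 1) := by
        rw [setIntegral_const, smul_eq_mul, measureReal_def, mul_one]
      rw [h1, hTdef]
      refine setIntegral_mono_on (integrableOn_const (measure_ne_top _ _))
        gauss_sq_int.integrableOn measurableSet_Iic (fun x hx => ?_)
      have hx' : x ≤ -(n:ℝ) := hx
      have hn' : (1:ℝ) ≤ (n:ℝ) := by exact_mod_cast hn1
      nlinarith
    have hpchalf : (P ((A 2)ᶜ)).toReal ≤ 1/2 := by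
      have := lt_of_lt_of_le hTn (min_le_right _ _)
      linarith
    have hsumP : (P (A 2)).toReal + (P ((A 2)ᶜ)).toReal = 1 := by
      rw [← ENNReal.toReal_add (measure_ne_top _ _) (measure_ne_top _ _),
        measure_add_measure_compl (hAm 2), measure_univ, ENNReal.toReal_one]
    have hp2half : 1/2 ≤ (P (A 2)).toReal := by linarith
    have hE : ∫ ω in (A 2)ᶜ, (m' + σ * W ω - m')^2 ∂P = σ^2 * T := by
      rw [hA2c]
      have h1 := hSI (Iic (-(n:ℝ))) measurableSet_Iic
        (fun x => (m' + σ * x - m')^2) (by fun_prop)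
      beta_reduce at h1
      rw [h1]
      have h2 : (fun x : ℝ => (m' + σ * x - m')^2) = fun x : ℝ => σ^2 * x^2 :=
        funext fun x => by ring
      rw [h2, integral_const_mul, hTdef]
    have hrtot : ∫ ω, (m' + σ * W ω - m') ∂P = 0 := by
      have h1 := hTI (fun x => m' + σ * x - m') (by fun_prop)
      beta_reduce at h1
      rw [h1]
      have h2 : (fun x : ℝ => m' + σ * x - m') = fun x : ℝ => σ * x := funext fun x => by ring
      rw [h2, integral_const_mul, gauss_mean_zero, mul_zero]
    have hsplit1 : (∫ ω in A 2, (m' + σ * W ω - m') ∂P)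
        + (∫ ω in (A 2)ᶜ, (m' + σ * W ω - m') ∂P) = 0 := by
      rw [integral_add_compl (hAm 2) (hI1 m' m'), hrtot]
    have hsplit2 : (∫ ω in A 2, (m' + σ * W ω - m')^2 ∂P)
        + (∫ ω in (A 2)ᶜ, (m' + σ * W ω - m')^2 ∂P) = σ^2 * I2 := by
      rw [integral_add_compl (hAm 2) (hI2 m' m')]
      have h1 := hTI (fun x => (m' + σ * x - m')^2) (by fun_prop)
      beta_reduce at h1
      rw [h1]
      have h2 : (fun x : ℝ => (m' + σ * x - m')^2) = fun x : ℝ => σ^2 * x^2 :=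
        funext fun x => by ring
      rw [h2, integral_const_mul, hI2def]
    set avc : ℝ := (∫ ω in (A 2)ᶜ, (m' + σ * W ω) ∂P) / (P ((A 2)ᶜ)).toReal with havcdef
    have hcpc : avc * (P ((A 2)ᶜ)).toReal = ∫ ω in (A 2)ᶜ, (m' + σ * W ω) ∂P :=
      avg_mul_measure P ((A 2)ᶜ) (fun ω => m' + σ * W ω)
    have hcec : ∫ ω in (A 2)ᶜ, (m' + σ * W ω - avc)^2 ∂P
        = (∫ ω in (A 2)ᶜ, (m' + σ * W ω - m')^2 ∂P)
          - (P ((A 2)ᶜ)).toReal * (avc - m')^2 :=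
      cell_expand P (fun ω => m' + σ * W ω) (hI1' m').integrableOn
        ((hI2 m' 0).congr (Eventually.of_forall fun ω => by ring)).integrableOn m' avc hcpc
    have hcecnn : 0 ≤ ∫ ω in (A 2)ᶜ, (m' + σ * W ω - avc)^2 ∂P :=
      setIntegral_nonneg (hAm 2).compl (fun ω _ => sq_nonneg _)
    have hr : ∫ ω in (A 2)ᶜ, (m' + σ * W ω - m') ∂P
        = (P ((A 2)ᶜ)).toReal * (avc - m') := by
      rw [integral_sub (hI1' m').integrableOn
        (integrableOn_const (measure_ne_top _ _)),
        setIntegral_const, smul_eq_mul, measureReal_def, ← hcpc]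
      ring
    have hr2 : ∫ ω in A 2, (m' + σ * W ω - m') ∂P
        = (P (A 2)).toReal * (av 2 - m') := by
      rw [integral_sub (hI1' m').integrableOn
        (integrableOn_const (measure_ne_top _ _)),
        setIntegral_const, smul_eq_mul, measureReal_def, ← hcp 2]
      ring
    have hce2 : ∫ ω in A 2, (m' + σ * W ω - av 2)^2 ∂P
        = (∫ ω in A 2, (m' + σ * W ω - m')^2 ∂P)
          - (P (A 2)).toReal * (av 2 - m')^2 :=
      cell_expand P (fun ω => m' + σ * W ω) (hI1' m').integrableOn
        ((hI2 m' 0).congr (Eventually.of_forall fun ω => by ring)).integrableOn m' (av 2) (hcp 2)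
    have hcs : (P ((A 2)ᶜ)).toReal * (avc - m')^2 ≤ σ^2 * T := by
      rw [hE] at hcec
      linarith
    have heq : (P (A 2)).toReal * (av 2 - m') = -((P ((A 2)ᶜ)).toReal * (avc - m')) := by
      rw [hr, hr2] at hsplit1
      linarith
    have hbound : (P (A 2)).toReal * (av 2 - m')^2 ≤ σ^2 * T := by
      have hsq : ((P (A 2)).toReal * (av 2 - m'))^2
          = ((P ((A 2)ᶜ)).toReal * (avc - m'))^2 := by rw [heq]; ring
      have h4 : (P (A 2)).toReal * ((P (A 2)).toReal * (av 2 - m')^2)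
          ≤ (P (A 2)).toReal * (σ^2 * T) := by
        have c2 := mul_le_mul_of_nonneg_left hcs hpcnn
        have c3 : (P ((A 2)ᶜ)).toReal * (σ^2 * T) ≤ (P (A 2)).toReal * (σ^2 * T) :=
          mul_le_mul_of_nonneg_right (by linarith) (by positivity)
        linarith [hsq, c2, c3]
      exact le_of_mul_le_mul_left h4 (lt_of_lt_of_le one_half_pos hp2half)
    have hnn0 : 0 ≤ ∫ ω in A 0, (m' + σ * W ω - av 0)^2 ∂P :=
      setIntegral_nonneg (hAm 0) (fun ω _ => sq_nonneg _)
    have hnn1 : 0 ≤ ∫ ω in A 1, (m' + σ * W ω - av 1)^2 ∂P :=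
      setIntegral_nonneg (hAm 1) (fun ω _ => sq_nonneg _)
    rw [hGm, Fin.sum_univ_three]
    linarith [hce2, hsplit2, hE, hbound]
  have h2σTq : 2*σ^2*T < q^2 := by
    have h := lt_of_lt_of_le hTn (min_le_left _ _)
    rw [lt_div_iff₀ (by positivity)] at h
    linarith
  exact ⟨0, m', ne_of_lt (by linarith [hup, hlow])⟩
end
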